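/- Let H be a complex Hilbert space, A a bounded self-adjoint linear operator on H, and φ, ψ : ℝ → ℂ continuous functions. Let F : ℝ → ℝ be concave and monotone increasing on [0,∞) with F(0) = 0, such that |φ(t)|² = F(|ψ(t)|²) for all t ∈ ℝ. Then for every δ > 0 and every x ∈ H with ‖ψ(A)x‖ ≤ 1 and ‖x‖ ≤ δ, one has ‖φ(A)x‖ ≤ δ·√(F(1/δ²)); that is, the modulus of continuity of φ(A) on the class W^ψ = {x ∈ H : ‖ψ(A)x‖ ≤ 1} satisfies ω(δ) ≤ δ·√(F(1/δ²)). -/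

import Mathlib

open scoped InnerProductSpace

/-- `re ⟪(|g|²)(A) x, x⟫ = ‖g(A) x‖²` for selfadjoint `A`. -/
lemma cfc_normSq_inner_eq {H : Type*} [NormedAddCommGroup H] [InnerProductSpace ℂ H]
    [CompleteSpace H] (A : H →L[ℂ] H) (hA : IsSelfAdjoint A)
    (g : ℝ → ℂ) (hg : Continuous g) (x : H) :
    RCLike.re ⟪cfc (fun t : ℝ => ‖g t‖ ^ 2) A x, x⟫_ℂ
      = ‖cfc (fun z : ℂ => g z.re) A x‖ ^ 2 := by
  have hop : cfc (fun t : ℝ => ‖g t‖ ^ 2) A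
      = star (cfc (fun z : ℂ => g z.re) A) * cfc (fun z : ℂ => g z.re) A := by
    rw [cfc_real_eq_complex (fun t : ℝ => ‖g t‖ ^ 2) hA, ← cfc_star, ← cfc_mul _ _ A
      (Continuous.continuousOn (by fun_prop)) (Continuous.continuousOn (by fun_prop))]
    refine cfc_congr fun z _ => ?_
    rw [RCLike.star_def, RCLike.conj_mul]
    norm_cast
  rw [hop, ContinuousLinearMap.mul_apply, ContinuousLinearMap.star_eq_adjoint,
    ContinuousLinearMap.adjoint_inner_left, inner_self_eq_norm_sq]

/-- Existence of a supporting line at an interior point for a concave function on `[0,∞)`,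
with nonnegative slope when the function is monotone. -/
lemma concave_supporting_line {F : ℝ → ℝ} (hFconc : ConcaveOn ℝ (Set.Ici 0) F)
    (hFmono : MonotoneOn F (Set.Ici 0)) {c : ℝ} (hc : 0 < c) :
    ∃ m : ℝ, 0 ≤ m ∧ ∀ s : ℝ, 0 ≤ s → F s ≤ F c + m * (s - c) := by
  set S : Set ℝ := (fun t => (F t - F c) / (t - c)) '' Set.Ioi c with hS
  have hSne : S.Nonempty := ⟨(F (c + 1) - F c) / (c + 1 - c), ⟨c + 1, by simp, rfl⟩⟩
  have key : ∀ u, 0 ≤ u → u < c → ∀ t, c < t →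
      (F t - F c) / (t - c) ≤ (F c - F u) / (c - u) := fun u hu huc t hct =>
    hFconc.slope_anti_adjacent hu (le_trans hc.le hct.le) huc hct
  have hbdd : BddAbove S := by
    refine ⟨(F c - F 0) / (c - 0), ?_⟩
    rintro s ⟨t, ht, rfl⟩
    exact key 0 le_rfl hc t ht
  set m : ℝ := sSup S with hm
  have hub : ∀ t, c < t → (F t - F c) / (t - c) ≤ m := fun t ht =>
    le_csSup hbdd ⟨t, ht, rfl⟩
  have hlb : ∀ u, 0 ≤ u → u < c → m ≤ (F c - F u) / (c - u) := fun u hu huc =>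
    csSup_le hSne (by rintro s ⟨t, ht, rfl⟩; exact key u hu huc t ht)
  have hm0 : 0 ≤ m := by
    refine le_trans ?_ (hub (c + 1) (by linarith))
    have h1 : F c ≤ F (c + 1) :=
      hFmono (Set.mem_Ici.mpr hc.le) (Set.mem_Ici.mpr (by linarith)) (by linarith)
    exact div_nonneg (by linarith) (by linarith)
  refine ⟨m, hm0, fun s hs => ?_⟩
  rcases lt_trichotomy s c with h | h | h
  · have h2 := hlb s hs h
    have h3 : 0 < c - s := by linarith
    rw [le_div_iff₀ h3] at h2
    nlinarith
  · subst h; linarith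
  · have h2 := hub s h
    have h3 : 0 < s - c := by linarith
    rw [div_le_iff₀ h3] at h2
    nlinarith

theorem modulus_of_continuity_upper_bound
    {H : Type*} [NormedAddCommGroup H] [InnerProductSpace ℂ H] [CompleteSpace H]
    (A : H →L[ℂ] H) (hA : IsSelfAdjoint A)
    (φ ψ : ℝ → ℂ) (hφ : Continuous φ) (hψ : Continuous ψ)
    (F : ℝ → ℝ) (hFconc : ConcaveOn ℝ (Set.Ici 0) F)
    (hFmono : MonotoneOn F (Set.Ici 0)) (hF0 : F 0 = 0)
    (hFφψ : ∀ t : ℝ, ‖φ t‖ ^ 2 = F (‖ψ t‖ ^ 2))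
    (δ : ℝ) (hδ : 0 < δ) :
    (∀ x : H, ‖cfc (fun z : ℂ => ψ z.re) A x‖ ≤ 1 → ‖x‖ ≤ δ →
      ‖cfc (fun z : ℂ => φ z.re) A x‖ ≤ δ * Real.sqrt (F (1 / δ ^ 2))) ∧
    sSup {r : ℝ | ∃ x : H, ‖cfc (fun z : ℂ => ψ z.re) A x‖ ≤ 1 ∧ ‖x‖ ≤ δ ∧
        r = ‖cfc (fun z : ℂ => φ z.re) A x‖}
      ≤ δ * Real.sqrt (F (1 / δ ^ 2)) := by
  set c : ℝ := 1 / δ ^ 2 with hc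
  have hc0 : 0 < c := by positivity
  have hFc0 : 0 ≤ F c := hF0 ▸ hFmono (Set.mem_Ici.mpr le_rfl) hc0.le hc0.le
  obtain ⟨m, hm0, hsupp⟩ := concave_supporting_line hFconc hFmono hc0
  have hβ0 : 0 ≤ F c - m * c := by
    have := hsupp 0 le_rfl
    rw [hF0] at this
    nlinarith
  have main : ∀ x : H, ‖cfc (fun z : ℂ => ψ z.re) A x‖ ≤ 1 → ‖x‖ ≤ δ →
      ‖cfc (fun z : ℂ => φ z.re) A x‖ ≤ δ * Real.sqrt (F (1 / δ ^ 2)) := by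
    intro x hx1 hxδ
    -- operator inequality via cfc_mono
    have hmono : cfc (fun t : ℝ => ‖φ t‖ ^ 2) A
        ≤ cfc (fun t : ℝ => (F c - m * c) + m * ‖ψ t‖ ^ 2) A := by
      refine cfc_mono (fun t _ => ?_) (Continuous.continuousOn (by fun_prop))
        (Continuous.continuousOn (by fun_prop))
      have := hsupp (‖ψ t‖ ^ 2) (by positivity)
      rw [hFφψ t]
      linarith
    have hpos : (0:ℝ) ≤ RCLike.re ⟪(cfc (fun t : ℝ => (F c - m * c) + m * ‖ψ t‖ ^ 2) A
        - cfc (fun t : ℝ => ‖φ t‖ ^ 2) A) x, x⟫_ℂ := by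
      rw [ContinuousLinearMap.le_def] at hmono
      exact (RCLike.nonneg_iff.mp (hmono.inner_nonneg_left x)).1
    rw [ContinuousLinearMap.sub_apply, inner_sub_left, map_sub, sub_nonneg] at hpos
    -- compute the right-hand side
    have hsplit : cfc (fun t : ℝ => (F c - m * c) + m * ‖ψ t‖ ^ 2) A
        = algebraMap ℝ (H →L[ℂ] H) (F c - m * c)
          + m • cfc (fun t : ℝ => ‖ψ t‖ ^ 2) A := by
      rw [cfc_add A (fun _ => F c - m * c) (fun t => m * ‖ψ t‖ ^ 2)
        (Continuous.continuousOn (by fun_prop)) (Continuous.continuousOn (by fun_prop)),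
        cfc_const _ A hA, cfc_const_mul _ _ A (Continuous.continuousOn (by fun_prop))]
    have hQ : RCLike.re ⟪cfc (fun t : ℝ => ‖ψ t‖ ^ 2) A x, x⟫_ℂ
        = ‖cfc (fun z : ℂ => ψ z.re) A x‖ ^ 2 := cfc_normSq_inner_eq A hA ψ hψ x
    have hP : RCLike.re ⟪cfc (fun t : ℝ => ‖φ t‖ ^ 2) A x, x⟫_ℂ
        = ‖cfc (fun z : ℂ => φ z.re) A x‖ ^ 2 := cfc_normSq_inner_eq A hA φ hφ x
    have hrhs : RCLike.re ⟪cfc (fun t : ℝ => (F c - m * c) + m * ‖ψ t‖ ^ 2) A x, x⟫_ℂ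
        = (F c - m * c) * ‖x‖ ^ 2 + m * ‖cfc (fun z : ℂ => ψ z.re) A x‖ ^ 2 := by
      rw [hsplit, ContinuousLinearMap.add_apply, inner_add_left, map_add,
        Algebra.algebraMap_eq_smul_one]
      rw [ContinuousLinearMap.smul_apply, ContinuousLinearMap.one_apply,
        ContinuousLinearMap.smul_apply]
      rw [RCLike.real_smul_eq_coe_smul (K := ℂ) (F c - m * c),
        RCLike.real_smul_eq_coe_smul (K := ℂ) m, inner_smul_left, inner_smul_left,
        RCLike.conj_ofReal, RCLike.conj_ofReal, RCLike.re_ofReal_mul, RCLike.re_ofReal_mul,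
        inner_self_eq_norm_sq, hQ]
    rw [hrhs, hP] at hpos
    -- numeric conclusion
    have hQ2 : ‖cfc (fun z : ℂ => ψ z.re) A x‖ ^ 2 ≤ 1 := by
      nlinarith [norm_nonneg (cfc (fun z : ℂ => ψ z.re) A x)]
    have hx2 : ‖x‖ ^ 2 ≤ δ ^ 2 := by nlinarith [norm_nonneg x]
    have hcδ : c * δ ^ 2 = 1 := by rw [hc]; field_simp
    have hfinal : ‖cfc (fun z : ℂ => φ z.re) A x‖ ^ 2 ≤ δ ^ 2 * F c := by nlinarith
    calc ‖cfc (fun z : ℂ => φ z.re) A x‖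
        = Real.sqrt (‖cfc (fun z : ℂ => φ z.re) A x‖ ^ 2) := by
          rw [Real.sqrt_sq (norm_nonneg _)]
      _ ≤ Real.sqrt (δ ^ 2 * F c) := Real.sqrt_le_sqrt hfinal
      _ = δ * Real.sqrt (F (1 / δ ^ 2)) := by
          rw [Real.sqrt_mul (by positivity), Real.sqrt_sq hδ.le]
  refine ⟨main, Real.sSup_le ?_ (by positivity)⟩
  rintro r ⟨x, h1, h2, rfl⟩
  exact main x h1 h2
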